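/- Fix 0 < r < 1 and 0 < a < 1 with a ≠ r. Then the function q ↦ D(aq ‖ rq)/q is nondecreasing in q on (0,1), where D is the binary relative entropy. -/

import Mathlib

/-- Binary relative entropy. -/
noncomputable def binRelEnt (p q : ℝ) : ℝ :=
  p * Real.log (p / q) + (1 - p) * Real.log ((1 - p) / (1 - q))

theorem stmt_15 (r a : ℝ) (hr0 : 0 < r) (hr1 : r < 1) (ha0 : 0 < a) (ha1 : a < 1)
    (hne : a ≠ r) :
    MonotoneOn (fun q : ℝ => binRelEnt (a * q) (r * q) / q) (Set.Ioo 0 1) := by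
  set g : ℝ → ℝ := fun q => a * Real.log (a / r) +
      (q⁻¹ - a) * (Real.log (1 - a * q) - Real.log (1 - r * q)) with hgdef
  have hu : ∀ q ∈ Set.Ioo (0:ℝ) 1, 0 < 1 - a * q := by
    intro q hq; nlinarith [hq.1, hq.2]
  have hv : ∀ q ∈ Set.Ioo (0:ℝ) 1, 0 < 1 - r * q := by
    intro q hq; nlinarith [hq.1, hq.2]
  have hderiv : ∀ q ∈ Set.Ioo (0:ℝ) 1, HasDerivAt g
      (-(q^2)⁻¹ * (Real.log (1 - a * q) - Real.log (1 - r * q))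
        + (q⁻¹ - a) * (-a / (1 - a * q) - -r / (1 - r * q))) q := by
    intro q hq
    have hq0 : q ≠ 0 := ne_of_gt hq.1
    have h1 : HasDerivAt (fun q : ℝ => q⁻¹ - a) (-(q^2)⁻¹) q := by
      simpa using (hasDerivAt_inv hq0).sub_const a
    have h2 : HasDerivAt (fun q : ℝ => Real.log (1 - a * q)) (-a / (1 - a * q)) q := by
      have h : HasDerivAt (fun q : ℝ => 1 - a * q) (-a) q := by
        simpa using ((hasDerivAt_id q).const_mul a).const_sub 1
      simpa using h.log (ne_of_gt (hu q hq))
    have h3 : HasDerivAt (fun q : ℝ => Real.log (1 - r * q)) (-r / (1 - r * q)) q := by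
      have h : HasDerivAt (fun q : ℝ => 1 - r * q) (-r) q := by
        simpa using ((hasDerivAt_id q).const_mul r).const_sub 1
      simpa using h.log (ne_of_gt (hv q hq))
    exact (h1.mul (h2.sub h3)).const_add _
  have hD : ∀ q ∈ Set.Ioo (0:ℝ) 1,
      0 ≤ -(q^2)⁻¹ * (Real.log (1 - a * q) - Real.log (1 - r * q))
        + (q⁻¹ - a) * (-a / (1 - a * q) - -r / (1 - r * q)) := by
    intro q hq
    have hu' := hu q hq
    have hv' := hv q hq
    have hq0 : (0:ℝ) < q := hq.1
    have key : Real.log ((1 - a * q) / (1 - r * q)) ≤ (1 - a * q) / (1 - r * q) - 1 :=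
      Real.log_le_sub_one_of_pos (by positivity)
    rw [Real.log_div (ne_of_gt hu') (ne_of_gt hv')] at key
    have e2 : (q⁻¹ - a) * (-a / (1 - a * q) - -r / (1 - r * q)) = (r - a) / (q * (1 - r * q)) := by
      field_simp [show 1 - q * a ≠ 0 by rw [mul_comm]; exact hu'.ne', show 1 - q * r ≠ 0 by rw [mul_comm]; exact hv'.ne']
      ring
    rw [e2]
    have e3 : (1 - a * q) / (1 - r * q) - 1 = (r - a) * q / (1 - r * q) := by
      field_simp [show 1 - q * r ≠ 0 by rw [mul_comm]; exact hv'.ne']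
      ring
    rw [e3] at key
    have hq2 : (0:ℝ) < q ^ 2 := by positivity
    have e4 : -(q ^ 2)⁻¹ * (Real.log (1 - a * q) - Real.log (1 - r * q)) + (r - a) / (q * (1 - r * q))
        = ((r - a) * q / (1 - r * q) - (Real.log (1 - a * q) - Real.log (1 - r * q))) / q ^ 2 := by
      field_simp
      ring
    rw [e4]
    exact div_nonneg (sub_nonneg.mpr key) hq2.le
  have hgmono : MonotoneOn g (Set.Ioo 0 1) := by
    apply monotoneOn_of_deriv_nonneg (convex_Ioo 0 1)
    · intro q hq; exact (hderiv q hq).continuousAt.continuousWithinAt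
    · rw [interior_Ioo]; intro q hq
      exact (hderiv q hq).differentiableAt.differentiableWithinAt
    · rw [interior_Ioo]; intro q hq
      rw [(hderiv q hq).deriv]; exact hD q hq
  have eqn : ∀ q ∈ Set.Ioo (0:ℝ) 1, binRelEnt (a * q) (r * q) / q = g q := by
    intro q hq
    have hq0 : q ≠ 0 := ne_of_gt hq.1
    have h1 : a * q / (r * q) = a / r := mul_div_mul_right _ _ hq0
    unfold binRelEnt
    rw [h1, Real.log_div (ne_of_gt (hu q hq)) (ne_of_gt (hv q hq))]
    simp only [hgdef]
    field_simp
  intro x hx y hy hxy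
  simp only
  rw [eqn x hx, eqn y hy]
  exact hgmono hx hy hxy
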